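/- Let x_1 ≤ x_2 ≤ … ≤ x_n be points of an interval [a,b] and let p_1, …, p_n be real numbers satisfying Steffensen's condition: Σ_{k=1}^n p_k > 0 and 0 ≤ Σ_{k=1}^m p_k ≤ Σ_{k=1}^n p_k for every m ∈ {1, …, n}. Then the discrete measure μ = Σ_{k=1}^n p_k δ_{x_k} is a Steffensen-Popoviciu measure on [a,b]; that is, Σ_{k=1}^n p_k f(x_k) ≥ 0 for every continuous convex function f : [a,b] → [0,∞). -/

import Mathlib

open Finset

/-- Example 1: a discrete measure `Σ p_k δ_{x_k}` supported by points
`x_1 ≤ … ≤ x_n` of `[a, b]` satisfying Steffensen's condition is a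
Steffensen–Popoviciu measure: `Σ p_k f(x_k) ≥ 0` for every continuous convex
`f : [a, b] → [0, ∞)`. -/
theorem steffensen_condition_implies_SP
    (a b : ℝ) (hab : a ≤ b) (n : ℕ)
    (x : ℕ → ℝ) (p : ℕ → ℝ)
    (hx_mem : ∀ k < n, x k ∈ Set.Icc a b)
    (hx_mono : ∀ i j, i ≤ j → j < n → x i ≤ x j)
    (hp_pos : 0 < ∑ k ∈ Finset.range n, p k)
    (hp_partial : ∀ m, 1 ≤ m → m ≤ n →
      0 ≤ (∑ k ∈ Finset.range m, p k) ∧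
      (∑ k ∈ Finset.range m, p k) ≤ ∑ k ∈ Finset.range n, p k)
    (f : ℝ → ℝ) (hf_cont : ContinuousOn f (Set.Icc a b))
    (hf_conv : ConvexOn ℝ (Set.Icc a b) f)
    (hf_nonneg : ∀ t ∈ Set.Icc a b, 0 ≤ f t) :
    0 ≤ ∑ k ∈ Finset.range n, p k * f (x k) := by
  rcases Nat.eq_zero_or_pos n with hn | hn
  · subst hn; simp
  set S : ℕ → ℝ := fun j => ∑ k ∈ Finset.range j, p k with hS
  have hS0 : ∀ j, j ≤ n → 0 ≤ S j := by
    intro j hj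
    rcases Nat.eq_zero_or_pos j with h | h
    · simp [hS, h]
    · exact (hp_partial j h hj).1
  have hSn : ∀ j, j ≤ n → S j ≤ S n := by
    intro j hj
    rcases Nat.eq_zero_or_pos j with h | h
    · simpa [hS, h] using le_of_lt hp_pos
    · exact (hp_partial j h hj).2
  -- choose an argmin m
  obtain ⟨m, hmmem, hmin⟩ := Finset.exists_min_image (Finset.range n)
    (fun k => f (x k)) ⟨0, Finset.mem_range.2 hn⟩
  rw [Finset.mem_range] at hmmem
  have hfx0 : ∀ k, k < n → 0 ≤ f (x k) := fun k hk => hf_nonneg _ (hx_mem k hk)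
  have hmin' : ∀ k, k < n → f (x m) ≤ f (x k) := fun k hk =>
    hmin k (Finset.mem_range.2 hk)
  -- monotonicity lemmas
  have hdec : ∀ i j, i ≤ j → j ≤ m → f (x j) ≤ f (x i) := by
    intro i j hij hjm
    have hiS := hx_mem i (lt_of_le_of_lt (hij.trans hjm) hmmem)
    have hmS := hx_mem m hmmem
    have hjmem : x j ∈ segment ℝ (x i) (x m) := by
      rw [segment_eq_Icc (hx_mono i m (hij.trans hjm) hmmem)]
      exact ⟨hx_mono i j hij (lt_of_le_of_lt hjm hmmem),
        hx_mono j m hjm hmmem⟩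
    have := hf_conv.le_on_segment hiS hmS hjmem
    have hle : f (x m) ≤ f (x i) := hmin' i (lt_of_le_of_lt (hij.trans hjm) hmmem)
    calc f (x j) ≤ max (f (x i)) (f (x m)) := this
      _ = f (x i) := max_eq_left hle
  have hinc : ∀ i j, m ≤ i → i ≤ j → j < n → f (x i) ≤ f (x j) := by
    intro i j hmi hij hjn
    have hjS := hx_mem j hjn
    have hmS := hx_mem m hmmem
    have himem : x i ∈ segment ℝ (x m) (x j) := by
      rw [segment_eq_Icc (hx_mono m j (hmi.trans hij) hjn)]
      exact ⟨hx_mono m i hmi (lt_of_le_of_lt hij hjn), hx_mono i j hij hjn⟩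
    have := hf_conv.le_on_segment hmS hjS himem
    have hle : f (x m) ≤ f (x j) := hmin' j hjn
    calc f (x i) ≤ max (f (x m)) (f (x j)) := this
      _ = f (x j) := max_eq_right hle
  -- Claim A : partial sums up to j ≤ m+1
  have claimA : ∀ j, 1 ≤ j → j ≤ m + 1 →
      S j * f (x (j - 1)) ≤ ∑ k ∈ Finset.range j, p k * f (x k) := by
    intro j h1 h2
    induction j with
    | zero => omega
    | succ j ih =>
      rcases Nat.eq_zero_or_pos j with hj0 | hj0
      · subst hj0; simp [hS, Finset.sum_range_one]
      · have hj2 : j ≤ m + 1 := by omega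
        have ihj := ih hj0 hj2
        have hjm : j - 1 ≤ m := by omega
        have hdj : f (x j) ≤ f (x (j - 1)) := hdec (j - 1) j (by omega) (by omega)
        have hSj : 0 ≤ S j := hS0 j (by omega)
        rw [Finset.sum_range_succ]
        have hkey : S (j + 1) * f (x j) = S j * f (x j) + p j * f (x j) := by
          simp [hS, Finset.sum_range_succ, add_mul]
        calc S (j + 1) * f (x j) = S j * f (x j) + p j * f (x j) := hkey
          _ ≤ S j * f (x (j - 1)) + p j * f (x j) := by
              have := mul_le_mul_of_nonneg_left hdj hSj
              linarith
          _ ≤ (∑ k ∈ Finset.range j, p k * f (x k)) + p j * f (x j) := by linarith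
  -- Claim B : tail sums, downward induction via t = n-1-j
  have claimB : ∀ t, t ≤ n - 1 - m →
      (S n - S (n - 1 - t)) * f (x (n - 1 - t)) ≤
        ∑ k ∈ Finset.Ico (n - 1 - t) n, p k * f (x k) := by
    intro t
    induction t with
    | zero =>
      intro _
      have h1 : n - 1 - 0 = n - 1 := by omega
      rw [h1]
      have h2 : Finset.Ico (n - 1) n = {n - 1} := by
        ext k; simp [Finset.mem_Ico]; omega
      rw [h2, Finset.sum_singleton]
      have h3 : S n - S (n - 1) = p (n - 1) := by
        have hn1 : n = (n - 1) + 1 := by omega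
        rw [hn1]
        simp [hS, Finset.sum_range_succ]
      rw [h3]
    | succ t ih =>
      intro ht
      have hj : n - 1 - (t + 1) = n - 2 - t := by omega
      set j := n - 2 - t with hjdef
      have hj1 : n - 1 - t = j + 1 := by omega
      have hjm : m ≤ j := by omega
      have hjn : j + 1 < n := by omega
      have ihj := ih (by omega)
      rw [hj1] at ihj
      rw [hj, Finset.sum_eq_sum_Ico_succ_bot (by omega : j < n)]
      have hT1 : 0 ≤ S n - S (j + 1) := by
        have := hSn (j + 1) (by omega); linarith
      have hincj : f (x j) ≤ f (x (j + 1)) := hinc j (j + 1) hjm (by omega) hjn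
      have hSp : S (j + 1) = S j + p j := by simp [hS, Finset.sum_range_succ]
      have h1 : (S n - S (j + 1)) * f (x j) ≤ (S n - S (j + 1)) * f (x (j + 1)) :=
        mul_le_mul_of_nonneg_left hincj hT1
      calc (S n - S j) * f (x j)
          = p j * f (x j) + (S n - S (j + 1)) * f (x j) := by rw [hSp]; ring
        _ ≤ p j * f (x j) + (S n - S (j + 1)) * f (x (j + 1)) := by linarith
        _ ≤ p j * f (x j) + ∑ k ∈ Finset.Ico (j + 1) n, p k * f (x k) := by linarith
  -- combine
  have hsplit : ∑ k ∈ Finset.range n, p k * f (x k)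
      = (∑ k ∈ Finset.range (m + 1), p k * f (x k))
        + ∑ k ∈ Finset.Ico (m + 1) n, p k * f (x k) := by
    rw [Finset.range_eq_Ico,
      ← Finset.sum_Ico_consecutive _ (Nat.zero_le (m + 1)) (by omega : m + 1 ≤ n), Finset.range_eq_Ico]
  have hA : 0 ≤ ∑ k ∈ Finset.range (m + 1), p k * f (x k) := by
    have := claimA (m + 1) (by omega) le_rfl
    have h0 : 0 ≤ S (m + 1) * f (x m) :=
      mul_nonneg (hS0 (m + 1) (by omega)) (hfx0 m hmmem)
    simpa using h0.trans this
  have hB : 0 ≤ ∑ k ∈ Finset.Ico (m + 1) n, p k * f (x k) := by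
    rcases Nat.lt_or_ge (m + 1) n with hlt | hge
    · have ht : n - 1 - (n - 1 - (m + 1)) = m + 1 := by omega
      have := claimB (n - 1 - (m + 1)) (by omega)
      rw [ht] at this
      have h0 : 0 ≤ (S n - S (m + 1)) * f (x (m + 1)) := by
        have h1 := hSn (m + 1) (by omega)
        exact mul_nonneg (by linarith) (hfx0 (m + 1) hlt)
      linarith
    · rw [Finset.Ico_eq_empty (by omega)]; simp
  linarith
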